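/- If a family 𝒜 of subsets of [n] contains no chain of k+1 pairwise comparable sets (i.e., 𝒜 is P_{k+1}-free), then |𝒜| is at most the sum of the k largest binomial coefficients (n choose l). -/

import Mathlib

lemma choose_mono_aux {n a b : ℕ} (hab : a ≤ b) (hb : 2 * b ≤ n + 1) :
    n.choose a ≤ n.choose b := by
  induction b with
  | zero => simp [Nat.le_zero.1 hab]
  | succ b ih =>
    rcases Nat.lt_or_ge a (b+1) with h | h
    · refine (ih (Nat.lt_succ_iff.1 h) (by omega)).trans ?_
      rcases Nat.lt_or_ge b (n/2) with hb2 | hb2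
      · exact Nat.choose_le_succ_of_lt_half_left hb2
      · -- 2b ≥ n-? and 2(b+1) ≤ n+1 so 2b+1 ≤ n ≤ 2b+? forces n = 2b+1
        have hn : n = 2*b + 1 := by omega
        have heq : n.choose (b+1) = n.choose b :=
          hn ▸ Nat.choose_symm_half b
        omega
    · exact (le_antisymm hab h) ▸ le_rfl

open Finset

open Classical in
noncomputable def hgt {n : ℕ} (𝒜 : Finset (Finset (Fin n))) (A : Finset (Fin n)) : ℕ :=
  (𝒜.powerset.filter fun (𝒞 : Finset (Finset (Fin n))) => A ∈ 𝒞 ∧ (∀ B ∈ 𝒞, B ⊆ A) ∧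
    IsChain (· ⊆ ·) (𝒞 : Set (Finset (Fin n)))).sup Finset.card

open Classical in
lemma singleton_mem_aux {n : ℕ} {𝒜 : Finset (Finset (Fin n))} {A : Finset (Fin n)} (hA : A ∈ 𝒜) :
    ({A} : Finset (Finset (Fin n))) ∈ 𝒜.powerset.filter
      fun (𝒞 : Finset (Finset (Fin n))) => A ∈ 𝒞 ∧ (∀ B ∈ 𝒞, B ⊆ A) ∧
        IsChain (· ⊆ ·) (𝒞 : Set (Finset (Fin n))) := by
  refine mem_filter.2 ⟨mem_powerset.2 (singleton_subset_iff.2 hA), mem_singleton_self A,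
    fun B hB => by rw [mem_singleton.1 hB], ?_⟩
  rw [coe_singleton]
  exact Set.subsingleton_singleton.isChain

open Classical in
lemma hgt_pos {n : ℕ} {𝒜 : Finset (Finset (Fin n))} {A : Finset (Fin n)} (hA : A ∈ 𝒜) :
    1 ≤ hgt 𝒜 A := by
  have h2 : ({A} : Finset (Finset (Fin n))).card ≤ hgt 𝒜 A :=
    Finset.le_sup (f := Finset.card) (singleton_mem_aux hA)
  rwa [card_singleton] at h2

open Classical in
lemma hgt_le {n k : ℕ} {𝒜 : Finset (Finset (Fin n))}
    (h : ¬ ∃ 𝒞 : Finset (Finset (Fin n)), 𝒞 ⊆ 𝒜 ∧ 𝒞.card = k + 1 ∧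
      IsChain (· ⊆ ·) (𝒞 : Set (Finset (Fin n)))) (A : Finset (Fin n)) :
    hgt 𝒜 A ≤ k := by
  refine Finset.sup_le fun 𝒞 h𝒞 => ?_
  simp only [mem_filter, mem_powerset] at h𝒞
  obtain ⟨hsub, -, -, hchain⟩ := h𝒞
  by_contra hlt
  obtain ⟨𝒟, h𝒟sub, h𝒟card⟩ := Finset.exists_subset_card_eq (s := 𝒞) (n := k+1) (by omega)
  exact h ⟨𝒟, h𝒟sub.trans hsub, h𝒟card, hchain.mono (by exact_mod_cast h𝒟sub)⟩

open Classical in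
lemma hgt_lt {n : ℕ} {𝒜 : Finset (Finset (Fin n))} {A B : Finset (Fin n)}
    (hA : A ∈ 𝒜) (hB : B ∈ 𝒜) (hAB : A ⊂ B) : hgt 𝒜 A < hgt 𝒜 B := by
  set s := 𝒜.powerset.filter fun (𝒞 : Finset (Finset (Fin n))) => A ∈ 𝒞 ∧ (∀ C ∈ 𝒞, C ⊆ A) ∧
      IsChain (· ⊆ ·) (𝒞 : Set (Finset (Fin n))) with hs
  have hne : s.Nonempty := ⟨{A}, singleton_mem_aux hA⟩
  obtain ⟨𝒞, h𝒞s, h𝒞⟩ := Finset.exists_mem_eq_sup s hne Finset.card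
  rw [hs, mem_filter, mem_powerset] at h𝒞s
  obtain ⟨hsub, hAmem, hble, hchain⟩ := h𝒞s
  have hBnot : B ∉ 𝒞 := fun hB' => (hAB.not_subset) (hble B hB')
  have hmem : insert B 𝒞 ∈ 𝒜.powerset.filter fun (𝒞 : Finset (Finset (Fin n))) => B ∈ 𝒞 ∧
      (∀ C ∈ 𝒞, C ⊆ B) ∧ IsChain (· ⊆ ·) (𝒞 : Set (Finset (Fin n))) := by
    refine mem_filter.2 ⟨mem_powerset.2 (insert_subset hB hsub), mem_insert_self _ _, ?_, ?_⟩
    · intro C hC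
      rcases mem_insert.1 hC with rfl | hC
      · exact Finset.Subset.refl _
      · exact (hble C hC).trans hAB.subset
    · rw [coe_insert]
      exact hchain.insert fun C hC _ => Or.inr ((hble C hC).trans hAB.subset)
  have h1 : (insert B 𝒞).card ≤ hgt 𝒜 B := Finset.le_sup (f := Finset.card) hmem
  rw [Finset.card_insert_of_notMem hBnot] at h1
  have h2 : hgt 𝒜 A = 𝒞.card := h𝒞
  omega

lemma level_antichain {n j : ℕ} {𝒜 : Finset (Finset (Fin n))} [DecidablePred (fun A => hgt 𝒜 A = j)] :
    IsAntichain (· ⊆ ·) ((𝒜.filter fun A => hgt 𝒜 A = j) : Set (Finset (Fin n))) := by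
  intro A hA B hB hne hsub
  simp only [coe_filter, Set.mem_setOf_eq] at hA hB
  exact absurd (hA.2.trans hB.2.symm)
    (hgt_lt hA.1 hB.1 ⟨hsub, fun h2 => hne (Finset.Subset.antisymm hsub h2)⟩).ne

theorem erdos_chain_free (n k : ℕ) (hk : 1 ≤ k) (hkn : k ≤ n + 1)
    (𝒜 : Finset (Finset (Fin n)))
    (h : ¬ ∃ 𝒞 : Finset (Finset (Fin n)), 𝒞 ⊆ 𝒜 ∧ 𝒞.card = k + 1 ∧
      IsChain (· ⊆ ·) (𝒞 : Set (Finset (Fin n)))) :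
    𝒜.card ≤ ∑ i ∈ Finset.range k, n.choose ((n - k + 1) / 2 + i) := by
  classical
  set m := (n - k + 1) / 2 with hm
  have hm2 : 2 * m ≤ n - k + 1 := by omega
  have hm2' : n ≤ 2 * m + k := by omega
  -- the set of middle levels
  set S : Finset ℕ := (Finset.range k).image (m + ·) with hS
  have hSmem : ∀ r, r ∈ S ↔ m ≤ r ∧ r < m + k := by
    intro r
    simp only [hS, mem_image, mem_range]
    constructor
    · rintro ⟨i, hi, rfl⟩; omega
    · rintro ⟨h1, h2⟩; exact ⟨r - m, by omega, by omega⟩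
  have hScard : S.card = k := by
    rw [hS, Finset.card_image_of_injective _ (fun a b => by omega), Finset.card_range]
  have hSsub : S ⊆ Finset.range (n + 1) := by
    intro r hr; rw [hSmem] at hr; rw [mem_range]; omega
  -- binomial coefficient facts
  have hcpos : ∀ r ∈ Finset.range (n + 1), 0 < n.choose r := fun r hr =>
    Nat.choose_pos (by rw [mem_range] at hr; omega)
  have hK2 : ∀ r ∈ S, n.choose m ≤ n.choose r := by
    intro r hr
    rw [hSmem] at hr
    rcases Nat.lt_or_ge (2 * r) (n + 2) with h2 | h2
    · exact choose_mono_aux hr.1 (by omega)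
    · rw [← Nat.choose_symm (n := n) (k := r) (by omega)]
      exact choose_mono_aux (by omega) (by omega)
  have hK1 : ∀ r ∈ Finset.range (n + 1), r ∉ S → n.choose r ≤ n.choose m := by
    intro r hr hrS
    rw [mem_range] at hr
    rw [hSmem] at hrS
    rcases Nat.lt_or_ge r m with h1 | h1
    · exact choose_mono_aux (by omega) (by omega)
    · have h2 : m + k ≤ r := by omega
      rw [← Nat.choose_symm (n := n) (k := r) (by omega)]
      exact choose_mono_aux (by omega) (by omega)
  -- slice cardinalities
  have hsplit : (𝒜.card : ℚ) = ∑ r ∈ Finset.range (n + 1), (#(𝒜 # r) : ℚ) := by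
    have h0 : ∑ r ∈ Finset.Iic n, #(𝒜 # r) = #𝒜 := by
      simpa using Finset.sum_card_slice (𝒜 := 𝒜)
    have h1 : Finset.Iic n = Finset.range (n + 1) := by
      ext x; simp [Nat.lt_succ_iff]
    rw [h1] at h0
    rw [← h0]
    push_cast
    rfl
  have hxc : ∀ r ∈ Finset.range (n + 1), (#(𝒜 # r) : ℚ) ≤ (n.choose r : ℚ) := by
    intro r hr
    have hsub : 𝒜 # r ⊆ Finset.powersetCard r (Finset.univ : Finset (Fin n)) := by
      intro A hA
      rw [Finset.mem_powersetCard]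
      exact ⟨Finset.subset_univ _, (Finset.mem_slice.1 hA).2⟩
    have hcard := Finset.card_le_card hsub
    rw [Finset.card_powersetCard, Finset.card_univ, Fintype.card_fin] at hcard
    exact_mod_cast hcard
  have hLYM : ∑ r ∈ Finset.range (n + 1), (#(𝒜 # r) : ℚ) / (n.choose r : ℚ) ≤ (k : ℚ) := by
    have hfib : ∀ r, #(𝒜 # r) =
        ∑ j ∈ Finset.range k, #((𝒜 # r).filter fun A => hgt 𝒜 A = j + 1) := by
      intro r
      rw [Finset.card_eq_sum_card_fiberwise (f := fun A => hgt 𝒜 A - 1) (t := Finset.range k)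
        (fun A hA => by
          rw [Finset.mem_coe, mem_range]
          have h1 := hgt_pos (Finset.slice_subset hA)
          have h2 := hgt_le h A
          show hgt 𝒜 A - 1 < k
          omega)]
      refine Finset.sum_congr rfl fun j _ => ?_
      congr 1
      refine Finset.filter_congr fun A hA => ?_
      have h1 := hgt_pos (Finset.slice_subset hA)
      show hgt 𝒜 A - 1 = j ↔ hgt 𝒜 A = j + 1
      omega
    have hcomm : ∀ (j r : ℕ), ((𝒜.filter fun A => hgt 𝒜 A = j + 1) # r) =
        (𝒜 # r).filter fun A => hgt 𝒜 A = j + 1 := by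
      intro j r
      ext A
      simp only [Finset.mem_slice, Finset.mem_filter]
      tauto
    calc ∑ r ∈ Finset.range (n + 1), (#(𝒜 # r) : ℚ) / (n.choose r : ℚ)
        = ∑ r ∈ Finset.range (n + 1), ∑ j ∈ Finset.range k,
            (#((𝒜.filter fun A => hgt 𝒜 A = j + 1) # r) : ℚ) / (n.choose r : ℚ) := by
          refine Finset.sum_congr rfl fun r _ => ?_
          rw [← Finset.sum_div]
          congr 1
          rw [hfib r]
          push_cast
          exact Finset.sum_congr rfl fun j _ => by rw [hcomm]
      _ = ∑ j ∈ Finset.range k, ∑ r ∈ Finset.range (n + 1),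
            (#((𝒜.filter fun A => hgt 𝒜 A = j + 1) # r) : ℚ) / (n.choose r : ℚ) :=
          Finset.sum_comm
      _ ≤ ∑ _j ∈ Finset.range k, (1 : ℚ) := by
          refine Finset.sum_le_sum fun j _ => ?_
          have := Finset.sum_card_slice_div_choose_le_one (𝕜 := ℚ)
            (level_antichain (n := n) (j := j + 1) (𝒜 := 𝒜))
          simpa using this
      _ = (k : ℚ) := by simp
  -- the LP bound
  have main : (𝒜.card : ℚ) ≤ ∑ r ∈ S, (n.choose r : ℚ) := by
    set T := Finset.range (n + 1) \ S with hT
    have hTsub : T ⊆ Finset.range (n + 1) := Finset.sdiff_subset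
    have hcm0 : (0 : ℚ) ≤ (n.choose m : ℚ) := by positivity
    have step1 : ∑ r ∈ T, (#(𝒜 # r) : ℚ) ≤
        (n.choose m : ℚ) * ∑ r ∈ T, (#(𝒜 # r) : ℚ) / (n.choose r : ℚ) := by
      rw [Finset.mul_sum]
      refine Finset.sum_le_sum fun r hr => ?_
      have hr' : r ∈ Finset.range (n + 1) := hTsub hr
      have hrS : r ∉ S := (Finset.mem_sdiff.1 hr).2
      have hc0 : (0 : ℚ) < (n.choose r : ℚ) := by exact_mod_cast hcpos r hr'
      have hle : (n.choose r : ℚ) ≤ (n.choose m : ℚ) := by exact_mod_cast hK1 r hr' hrS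
      calc (#(𝒜 # r) : ℚ) = (#(𝒜 # r) : ℚ) / (n.choose r : ℚ) * (n.choose r : ℚ) :=
            (div_mul_cancel₀ _ hc0.ne').symm
        _ ≤ (#(𝒜 # r) : ℚ) / (n.choose r : ℚ) * (n.choose m : ℚ) :=
            mul_le_mul_of_nonneg_left hle (div_nonneg (by positivity) hc0.le)
        _ = (n.choose m : ℚ) * ((#(𝒜 # r) : ℚ) / (n.choose r : ℚ)) := mul_comm _ _
    have hsplitdiv : ∑ r ∈ T, (#(𝒜 # r) : ℚ) / (n.choose r : ℚ)
        + ∑ r ∈ S, (#(𝒜 # r) : ℚ) / (n.choose r : ℚ)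
        = ∑ r ∈ Finset.range (n + 1), (#(𝒜 # r) : ℚ) / (n.choose r : ℚ) :=
      Finset.sum_sdiff hSsub
    have step2 : (n.choose m : ℚ) * ∑ r ∈ T, (#(𝒜 # r) : ℚ) / (n.choose r : ℚ) ≤
        (n.choose m : ℚ) * ((k : ℚ) - ∑ r ∈ S, (#(𝒜 # r) : ℚ) / (n.choose r : ℚ)) := by
      refine mul_le_mul_of_nonneg_left (by linarith) hcm0
    have step3 : (n.choose m : ℚ) * ((k : ℚ) - ∑ r ∈ S, (#(𝒜 # r) : ℚ) / (n.choose r : ℚ))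
        = ∑ r ∈ S, ((n.choose m : ℚ) - (n.choose m : ℚ) * ((#(𝒜 # r) : ℚ) / (n.choose r : ℚ))) := by
      rw [Finset.sum_sub_distrib, ← Finset.mul_sum, Finset.sum_const, hScard, mul_sub]
      push_cast
      ring
    have step4 : ∑ r ∈ S, ((n.choose m : ℚ) - (n.choose m : ℚ) * ((#(𝒜 # r) : ℚ) / (n.choose r : ℚ)))
        ≤ ∑ r ∈ S, ((n.choose r : ℚ) - (#(𝒜 # r) : ℚ)) := by
      refine Finset.sum_le_sum fun r hr => ?_
      have hr' : r ∈ Finset.range (n + 1) := hSsub hr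
      have hc0 : (0 : ℚ) < (n.choose r : ℚ) := by exact_mod_cast hcpos r hr'
      have hle : (n.choose m : ℚ) ≤ (n.choose r : ℚ) := by exact_mod_cast hK2 r hr
      have ht1 : (#(𝒜 # r) : ℚ) / (n.choose r : ℚ) ≤ 1 := (div_le_one hc0).2 (hxc r hr')
      have ht0 : (0 : ℚ) ≤ (#(𝒜 # r) : ℚ) / (n.choose r : ℚ) := div_nonneg (by positivity) hc0.le
      have key : (n.choose m : ℚ) * (1 - (#(𝒜 # r) : ℚ) / (n.choose r : ℚ)) ≤
          (n.choose r : ℚ) * (1 - (#(𝒜 # r) : ℚ) / (n.choose r : ℚ)) :=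
        mul_le_mul_of_nonneg_right hle (by linarith)
      have hexp : (n.choose r : ℚ) * (1 - (#(𝒜 # r) : ℚ) / (n.choose r : ℚ))
          = (n.choose r : ℚ) - (#(𝒜 # r) : ℚ) := by
        field_simp
      nlinarith [key, hexp]
    have hsplitS : ∑ r ∈ T, (#(𝒜 # r) : ℚ) + ∑ r ∈ S, (#(𝒜 # r) : ℚ)
        = ∑ r ∈ Finset.range (n + 1), (#(𝒜 # r) : ℚ) := Finset.sum_sdiff hSsub
    have hfin : ∑ r ∈ S, ((n.choose r : ℚ) - (#(𝒜 # r) : ℚ))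
        = ∑ r ∈ S, (n.choose r : ℚ) - ∑ r ∈ S, (#(𝒜 # r) : ℚ) := Finset.sum_sub_distrib _ _
    rw [hsplit]
    linarith
  have hrhs : ∑ r ∈ S, (n.choose r : ℚ) = ((∑ i ∈ Finset.range k, n.choose (m + i) : ℕ) : ℚ) := by
    push_cast
    rw [hS, Finset.sum_image (fun a _ b _ => by omega)]
  rw [hrhs] at main
  exact_mod_cast main
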